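/- In (Z/8Z)[x₁,x₂] with I = ⟨2x₁, 2x₂⟩ and presentation φ : (Z/8Z)[x₁,x₂][T₁,T₂] → (Z/8Z)[x₁,x₂][It], φ(T₁) = 2x₁·t, φ(T₂) = 2x₂·t: the element T₁³ lies in ker φ but does not lie in the ideal J = ⟨x₁T₂ − x₂T₁, 4T₁, 4T₂⟩. -/
import Mathlib


open MvPolynomial

/-- Example 4.4 (first part): over `Z/8Z[x₁,x₂]` with `I = ⟨2x₁, 2x₂⟩` and the Rees
presentation `φ(T₁) = 2x₁t`, `φ(T₂) = 2x₂t`, the element `T₁³` lies in `ker φ` but not in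
the presentation-matrix ideal `J = ⟨x₁T₂ − x₂T₁, 4T₁, 4T₂⟩`. -/
theorem stmt15 :
    letI P := MvPolynomial (Fin 2) (ZMod 8)
    letI φ : MvPolynomial (Fin 2) P →ₐ[P] MvPolynomial (Fin 1) P :=
      aeval (fun i : Fin 2 => C ((2 : P) * X i) * X (0 : Fin 1))
    letI J : Ideal (MvPolynomial (Fin 2) P) :=
      Ideal.span {C (X 0 : P) * X 1 - C (X 1 : P) * X 0, 4 * X 0, 4 * X 1}
    φ ((X 0 : MvPolynomial (Fin 2) P) ^ 3) = 0 ∧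
      (X 0 : MvPolynomial (Fin 2) P) ^ 3 ∉ J := by
  set P := MvPolynomial (Fin 2) (ZMod 8)
  constructor
  · have h2 : ((2:P))^3 = 0 := by
      have h := CharP.cast_eq_zero P 8
      norm_num at h
      rw [show ((2:P)^3 = 8) by norm_num, h]
    have h8 : ((2 : P) * X 0) ^ 3 = 0 := by
      rw [mul_pow, h2, zero_mul]
    simp only [map_pow, aeval_X]
    rw [mul_pow, ← map_pow, h8, map_zero, zero_mul]
  · intro hmem
    -- map to (ZMod 2)[t]: x₁, x₂ ↦ 0, T₁ ↦ t, T₂ ↦ 0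
    let g : P →+* ZMod 2 :=
      eval₂Hom (ZMod.castHom (show (2:ℕ) ∣ 8 by norm_num) (ZMod 2)) (fun _ => 0)
    let ψ : MvPolynomial (Fin 2) P →+* Polynomial (ZMod 2) :=
      eval₂Hom (Polynomial.C.comp g) (fun i => if i = 0 then Polynomial.X else 0)
    have hgX : ∀ j : Fin 2, g (X j) = 0 := fun j => eval₂Hom_X' _ _ j
    have hψC : ∀ p : P, ψ (C p) = Polynomial.C (g p) := fun p => eval₂Hom_C _ _ p
    have hψX : ∀ i : Fin 2, ψ (X i) = if i = 0 then Polynomial.X else 0 :=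
      fun i => eval₂Hom_X' _ _ i
    have h4 : (4 : Polynomial (ZMod 2)) = 0 := by
      have h := CharP.cast_eq_zero (Polynomial (ZMod 2)) 2
      norm_num at h
      rw [show ((4 : Polynomial (ZMod 2)) = 2*2) by norm_num, h, mul_zero]
    have hJ : ∀ y ∈ ({C (X 0 : P) * X 1 - C (X 1 : P) * X 0, 4 * X 0, 4 * X 1} :
        Set (MvPolynomial (Fin 2) P)), ψ y = 0 := by
      intro y hy
      rcases hy with rfl | rfl | rfl
      · rw [map_sub, map_mul, map_mul, hψC, hψC, hgX, hgX]
        simp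
      · rw [map_mul, map_ofNat, h4, zero_mul]
      · rw [map_mul, map_ofNat, h4, zero_mul]
    have h0 : ψ ((X 0 : MvPolynomial (Fin 2) P) ^ 3) = 0 := by
      have : (X 0 : MvPolynomial (Fin 2) P) ^ 3 ∈ RingHom.ker ψ :=
        (Ideal.span_le (I := RingHom.ker ψ)).mpr (fun y hy => hJ y hy) hmem
      exact this
    rw [map_pow, hψX 0, if_pos rfl] at h0
    exact pow_ne_zero 3 Polynomial.X_ne_zero h0
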